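/- Let γ > 0, λ > 0, ω > 4/γ², and let ψ be the antisymmetric stationary state: ψ(x) = −√(2ω/λ)·sech(√ω(x − x̄)) for x < 0 and ψ(x) = √(2ω/λ)·sech(√ω(x + x̄)) for x > 0, with x̄ = (1/(2√ω))·log((γ√ω + 2)/(γ√ω − 2)). Then: (i) ∫_ℝ ψ² dx = 4√ω/λ − 8/(γλ); (ii) E_{γδ'}(ψ) = 16/(3γ³λ) − (2/(3λ))ω^{3/2}; (iii) S_ω(ψ) := E_{γδ'}(ψ) + (ω/2)∫_ℝ ψ² dx = 16/(3γ³λ) − 4ω/(γλ) + (4/(3λ))ω^{3/2}. -/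

import Mathlib

open MeasureTheory Real Filter Set Topology

noncomputable section

/-- sech x = 1 / cosh x -/
def sech (x : ℝ) : ℝ := 1 / Real.cosh x

lemma my_tanh_hasDerivAt (x : ℝ) : HasDerivAt Real.tanh (1 / Real.cosh x ^ 2) x := by
  have h := (Real.hasDerivAt_sinh x).div (Real.hasDerivAt_cosh x) (Real.cosh_pos x).ne'
  have e : Real.tanh = fun y => Real.sinh y / Real.cosh y :=
    funext fun y => Real.tanh_eq_sinh_div_cosh y
  rw [e]
  refine h.congr_deriv ?_
  have h1 : Real.cosh x * Real.cosh x - Real.sinh x * Real.sinh x = 1 := by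
    nlinarith [Real.cosh_sq_sub_sinh_sq x]
  rw [h1]

lemma my_tanh_formula (x : ℝ) :
    Real.tanh x = (Real.exp (2*x) - 1) / (Real.exp (2*x) + 1) := by
  rw [Real.tanh_eq_sinh_div_cosh, Real.sinh_eq, Real.cosh_eq]
  have h2 : Real.exp (2*x) = Real.exp x * Real.exp x := by rw [two_mul, Real.exp_add]
  have h : Real.exp x ≠ 0 := (Real.exp_pos x).ne'
  have d1 : Real.exp x + Real.exp (-x) ≠ 0 := by positivity
  have d2 : Real.exp x * Real.exp x + 1 ≠ 0 := by positivity
  rw [h2, Real.exp_neg] at *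
  field_simp

lemma my_tendsto_tanh : Tendsto Real.tanh atTop (𝓝 1) := by
  have h1 : Tendsto (fun x : ℝ => Real.exp (2*x) + 1) atTop atTop :=
    tendsto_atTop_add_const_right atTop 1
      (Real.tendsto_exp_atTop.comp (Tendsto.const_mul_atTop two_pos tendsto_id))
  have h2 : Tendsto (fun x : ℝ => 2 / (Real.exp (2*x) + 1)) atTop (𝓝 0) := by
    have := h1.inv_tendsto_atTop.const_mul (2:ℝ)
    simpa [div_eq_mul_inv] using this
  have h3 : Tendsto (fun x : ℝ => 1 - 2 / (Real.exp (2*x) + 1)) atTop (𝓝 (1 - 0)) :=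
    tendsto_const_nhds.sub h2
  rw [show (1:ℝ) = 1 - 0 by ring]
  refine Tendsto.congr (fun x => ?_) h3
  have d : Real.exp (2*x) + 1 ≠ 0 := by positivity
  rw [my_tanh_formula x]
  field_simp
  ring

lemma my_sech_sq (x : ℝ) : (1 / Real.cosh x)^2 = 1 - Real.tanh x ^ 2 := by
  have h := Real.cosh_sq_sub_sinh_sq x
  have hc : Real.cosh x ≠ 0 := (Real.cosh_pos x).ne'
  rw [Real.tanh_eq_sinh_div_cosh]
  field_simp
  linarith

lemma my_affine_deriv (s b x : ℝ) : HasDerivAt (fun y : ℝ => s*y+b) s x := by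
  simpa using ((hasDerivAt_id x).const_mul s).add_const b

lemma my_tendsto_affine {s : ℝ} (hs : 0 < s) (b : ℝ) :
    Tendsto (fun y : ℝ => s*y+b) atTop atTop :=
  tendsto_atTop_add_const_right atTop b (Tendsto.const_mul_atTop hs tendsto_id)

lemma int_sech2 (s b : ℝ) (hs : 0 < s) :
    (∫ x in Ioi (0:ℝ), (1 / Real.cosh (s*x+b))^2) = (1 - Real.tanh b) / s := by
  have hu : ∀ x ∈ Ici (0:ℝ), HasDerivAt (fun y => Real.tanh (s*y+b) / s)
      ((1 / Real.cosh (s*x+b))^2) x := by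
    intro x _
    have h2 := ((my_tanh_hasDerivAt (s*x+b)).comp x (my_affine_deriv s b x)).div_const s
    refine h2.congr_deriv ?_
    field_simp [hs.ne']
  have hlim : Tendsto (fun y => Real.tanh (s*y+b) / s) atTop (𝓝 (1/s)) :=
    (my_tendsto_tanh.comp (my_tendsto_affine hs b)).div_const s
  rw [integral_Ioi_of_hasDerivAt_of_nonneg' hu (fun x _ => by positivity) hlim]
  rw [mul_zero, zero_add]
  ring

lemma int_sech4 (s b : ℝ) (hs : 0 < s) :
    (∫ x in Ioi (0:ℝ), ((1 / Real.cosh (s*x+b))^2)^2)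
      = (2/3 - Real.tanh b + Real.tanh b ^ 3 / 3) / s := by
  have hu : ∀ x ∈ Ici (0:ℝ), HasDerivAt
      (fun y => (Real.tanh (s*y+b) - Real.tanh (s*y+b)^3 / 3) / s)
      (((1 / Real.cosh (s*x+b))^2)^2) x := by
    intro x _
    have ht := (my_tanh_hasDerivAt (s*x+b)).comp x (my_affine_deriv s b x)
    have h2 := ((ht.sub ((ht.pow 3).div_const 3)).div_const s)
    have h' : 1 / Real.cosh (s*x+b) ^ 2 = 1 - Real.tanh (s*x+b) ^ 2 := by
      rw [← my_sech_sq (s*x+b), div_pow, one_pow]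
    refine h2.congr_deriv ?_
    rw [Function.comp_def]
    push_cast
    rw [h', my_sech_sq (s*x+b)]
    field_simp [hs.ne']
  have hlim : Tendsto (fun y => (Real.tanh (s*y+b) - Real.tanh (s*y+b)^3 / 3) / s)
      atTop (𝓝 ((1 - 1^3/3) / s)) := by
    have h := my_tendsto_tanh.comp (my_tendsto_affine hs b)
    exact (h.sub ((h.pow 3).div_const 3)).div_const s
  rw [integral_Ioi_of_hasDerivAt_of_nonneg' hu (fun x _ => by positivity) hlim]
  rw [mul_zero, zero_add]
  ring

lemma int_tanhsech (s b : ℝ) (hs : 0 < s) :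
    (∫ x in Ioi (0:ℝ), (Real.tanh (s*x+b) * (1 / Real.cosh (s*x+b)))^2)
      = (1 - Real.tanh b ^ 3) / (3*s) := by
  have hu : ∀ x ∈ Ici (0:ℝ), HasDerivAt
      (fun y => Real.tanh (s*y+b)^3 / (3*s))
      ((Real.tanh (s*x+b) * (1 / Real.cosh (s*x+b)))^2) x := by
    intro x _
    have ht := (my_tanh_hasDerivAt (s*x+b)).comp x (my_affine_deriv s b x)
    have h2 := (ht.pow 3).div_const (3*s)
    have h' : 1 / Real.cosh (s*x+b) ^ 2 = 1 - Real.tanh (s*x+b) ^ 2 := by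
      rw [← my_sech_sq (s*x+b), div_pow, one_pow]
    refine h2.congr_deriv ?_
    rw [Function.comp_def]
    push_cast
    rw [h']
    rw [mul_pow, my_sech_sq (s*x+b)]
    field_simp [hs.ne']
  have hlim : Tendsto (fun y => Real.tanh (s*y+b)^3 / (3*s)) atTop (𝓝 (1^3 / (3*s))) :=
    ((my_tendsto_tanh.comp (my_tendsto_affine hs b)).pow 3).div_const (3*s)
  rw [integral_Ioi_of_hasDerivAt_of_nonneg' hu (fun x _ => by positivity) hlim]
  rw [mul_zero, zero_add]
  ring


/-- L²-norm, delta-prime energy and action of the antisymmetric stationary state of the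
cubic NLS with a delta-prime interaction of strength γ, for ω > 4/γ². Here `f₁`, `f₂` are
the two branches of ψ, so ψ(0−) = f₁ 0 and ψ(0+) = f₂ 0. -/
theorem statement12 (γ lam ω : ℝ) (hγ : 0 < γ) (hlam : 0 < lam) (hω : 4 / γ ^ 2 < ω)
    (xbar : ℝ)
    (hxbar : xbar = (1 / (2 * Real.sqrt ω)) *
      Real.log ((γ * Real.sqrt ω + 2) / (γ * Real.sqrt ω - 2)))
    (f₁ f₂ ψ : ℝ → ℝ)
    (hf₁ : ∀ x, f₁ x = -(Real.sqrt (2 * ω / lam) * sech (Real.sqrt ω * (x - xbar))))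
    (hf₂ : ∀ x, f₂ x = Real.sqrt (2 * ω / lam) * sech (Real.sqrt ω * (x + xbar)))
    (hψ : ∀ x, ψ x = if x < 0 then f₁ x else f₂ x) :
    (∫ x : ℝ, (ψ x) ^ 2) = 4 * Real.sqrt ω / lam - 8 / (γ * lam) ∧
    (1 / 2) * (∫ x in ({(0:ℝ)}ᶜ : Set ℝ), (deriv ψ x) ^ 2)
        - (1 / (2 * γ)) * (f₂ 0 - f₁ 0) ^ 2 - (lam / 4) * (∫ x : ℝ, (ψ x) ^ 4)
      = 16 / (3 * γ ^ 3 * lam) - (2 / (3 * lam)) * ω ^ ((3:ℝ)/2) ∧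
    ((1 / 2) * (∫ x in ({(0:ℝ)}ᶜ : Set ℝ), (deriv ψ x) ^ 2)
        - (1 / (2 * γ)) * (f₂ 0 - f₁ 0) ^ 2 - (lam / 4) * (∫ x : ℝ, (ψ x) ^ 4))
        + (ω / 2) * (∫ x : ℝ, (ψ x) ^ 2)
      = 16 / (3 * γ ^ 3 * lam) - 4 * ω / (γ * lam) + (4 / (3 * lam)) * ω ^ ((3:ℝ)/2) := by
  have hω0 : 0 < ω := lt_trans (by positivity) hω
  set s := Real.sqrt ω with hs_def
  have hs : 0 < s := Real.sqrt_pos.2 hω0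
  have hs2 : s ^ 2 = ω := Real.sq_sqrt hω0.le
  have hc : 2 < γ * s := by
    have h2γ : 2 / γ < s := by
      rw [hs_def]
      rw [show Real.sqrt ω = √ω from rfl]
      refine (Real.lt_sqrt (by positivity)).2 ?_
      rw [div_pow]
      norm_num
      exact hω
    calc 2 = γ * (2 / γ) := by field_simp
    _ < γ * s := by exact mul_lt_mul_of_pos_left h2γ hγ
  set b := s * xbar with hb_def
  set A := Real.sqrt (2 * ω / lam) with hA_def
  have hA2 : A ^ 2 = 2 * ω / lam := Real.sq_sqrt (by positivity)
  have hgs : γ * s ≠ 0 := by positivity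
  have hm2 : γ * s - 2 ≠ 0 := by linarith
  have hp2 : γ * s + 2 ≠ 0 := by positivity
  have hblog : b = Real.log ((γ * s + 2) / (γ * s - 2)) / 2 := by
    rw [hb_def, hxbar]
    field_simp
  have hτ : Real.tanh b = 2 / (γ * s) := by
    rw [my_tanh_formula, hblog,
      show 2 * (Real.log ((γ * s + 2) / (γ * s - 2)) / 2)
        = Real.log ((γ * s + 2) / (γ * s - 2)) by ring,
      Real.exp_log (div_pos (by linarith) (by linarith))]
    have key : ∀ p q r : ℝ, r ≠ 0 → p / r / (q / r) = p / q := by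
      intro p q r hr
      rw [div_div_div_comm, div_self hr, div_one]
    rw [div_sub_one hm2, div_add_one hm2, key _ _ _ hm2,
      show γ * s + 2 - (γ * s - 2) = 4 by ring,
      show γ * s + 2 + (γ * s - 2) = 2 * (γ * s) by ring]
    rw [show (4:ℝ) = 2 * 2 by norm_num, mul_div_mul_left _ _ (two_ne_zero)]
  -- branch formulas
  have hf2' : ∀ y, f₂ y = A * (1 / Real.cosh (s * y + b)) := by
    intro y
    rw [hf₂ y, show s * (y + xbar) = s * y + b by rw [hb_def]; ring]
    rfl
  have hf1' : ∀ y, f₁ y = -(A * (1 / Real.cosh (s * y - b))) := by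
    intro y
    rw [hf₁ y, show s * (y - xbar) = s * y - b by rw [hb_def]; ring]
    rfl
  -- pointwise squares
  have hsq : ∀ x : ℝ, ψ x ^ 2 = A ^ 2 * (1 / Real.cosh (s * |x| + b)) ^ 2 := by
    intro x
    rcases lt_or_ge x 0 with hx | hx
    · rw [hψ x, if_pos hx, hf1' x, abs_of_neg hx,
        show s * (-x) + b = -(s * x - b) by ring, Real.cosh_neg]
      ring
    · rw [hψ x, if_neg (not_lt.2 hx), hf2' x, abs_of_nonneg hx]
      ring
  have h4 : ∀ x : ℝ, ψ x ^ 4 = (A ^ 2) ^ 2 * ((1 / Real.cosh (s * |x| + b)) ^ 2) ^ 2 := by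
    intro x
    rw [show ψ x ^ 4 = (ψ x ^ 2) ^ 2 by ring, hsq x]
    ring
  -- derivatives of branches
  have hd2 : ∀ x, HasDerivAt f₂
      (-(A * s) * (Real.tanh (s * x + b) * (1 / Real.cosh (s * x + b)))) x := by
    intro x
    have h0 : HasDerivAt (fun y => Real.cosh (s * y + b)) (Real.sinh (s * x + b) * s) x :=
      by have := (Real.hasDerivAt_cosh (s * x + b)).comp x (my_affine_deriv s b x); exact this
    have h1 := (h0.inv (Real.cosh_pos _).ne').const_mul A
    have e : f₂ = fun y => A * (Real.cosh (s * y + b))⁻¹ :=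
      funext fun y => by rw [hf2' y, one_div]
    rw [e]
    refine h1.congr_deriv ?_
    rw [Real.tanh_eq_sinh_div_cosh]
    have hcosh := (Real.cosh_pos (s * x + b)).ne'
    field_simp
  have hd1 : ∀ x, HasDerivAt f₁
      ((A * s) * (Real.tanh (s * x - b) * (1 / Real.cosh (s * x - b)))) x := by
    intro x
    have h0 : HasDerivAt (fun y => Real.cosh (s * y - b)) (Real.sinh (s * x - b) * s) x := by
      have := (Real.hasDerivAt_cosh (s * x + -b)).comp x (my_affine_deriv s (-b) x)
      simpa [sub_eq_add_neg, Function.comp_def] using this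
    have h1 := ((h0.inv (Real.cosh_pos _).ne').const_mul A).neg
    have e : f₁ = fun y => -(A * (Real.cosh (s * y - b))⁻¹) :=
      funext fun y => by rw [hf1' y, one_div]
    rw [e]
    refine h1.congr_deriv ?_
    rw [Real.tanh_eq_sinh_div_cosh]
    have hcosh := (Real.cosh_pos (s * x - b)).ne'
    field_simp
  -- a.e. identity for the derivative squared
  have hderiv_ae : (fun x : ℝ => (deriv ψ x) ^ 2)
      =ᵐ[volume] fun x =>
        (fun y => A ^ 2 * s ^ 2 * (Real.tanh (s * y + b) * (1 / Real.cosh (s * y + b))) ^ 2) |x| := by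
    filter_upwards [compl_mem_ae_iff.2 (measure_singleton (0:ℝ))] with x hx
    have hx' : x ≠ 0 := hx
    rcases hx'.lt_or_gt with h | h
    · have hev : ψ =ᶠ[𝓝 x] f₁ := by
        filter_upwards [Iio_mem_nhds h] with y hy
        rw [hψ y, if_pos (show y < 0 from hy)]
      rw [((hd1 x).congr_of_eventuallyEq hev).deriv]
      simp only [abs_of_neg h]
      rw [show s * (-x) + b = -(s * x - b) by ring, Real.tanh_neg, Real.cosh_neg]
      ring
    · have hev : ψ =ᶠ[𝓝 x] f₂ := by
        filter_upwards [Ioi_mem_nhds h] with y hy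
        rw [hψ y, if_neg (not_lt.2 (le_of_lt (show 0 < y from hy)))]
      rw [((hd2 x).congr_of_eventuallyEq hev).deriv]
      simp only [abs_of_pos h]
      ring
  -- the three integrals
  have hint2 : (∫ x : ℝ, ψ x ^ 2) = 2 * (A ^ 2 * ((1 - Real.tanh b) / s)) := by
    calc (∫ x : ℝ, ψ x ^ 2)
        = ∫ x : ℝ, (fun y => A ^ 2 * (1 / Real.cosh (s * y + b)) ^ 2) |x| :=
          integral_congr_ae (Eventually.of_forall fun x => hsq x)
      _ = 2 * ∫ x in Ioi (0:ℝ), A ^ 2 * (1 / Real.cosh (s * x + b)) ^ 2 :=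
          integral_comp_abs (f := fun y => A ^ 2 * (1 / Real.cosh (s * y + b)) ^ 2)
      _ = 2 * (A ^ 2 * ((1 - Real.tanh b) / s)) := by
          rw [MeasureTheory.integral_const_mul, int_sech2 s b hs]
  have hint4 : (∫ x : ℝ, ψ x ^ 4)
      = 2 * ((A ^ 2) ^ 2 * ((2/3 - Real.tanh b + Real.tanh b ^ 3 / 3) / s)) := by
    calc (∫ x : ℝ, ψ x ^ 4)
        = ∫ x : ℝ, (fun y => (A ^ 2) ^ 2 * ((1 / Real.cosh (s * y + b)) ^ 2) ^ 2) |x| :=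
          integral_congr_ae (Eventually.of_forall fun x => h4 x)
      _ = 2 * ∫ x in Ioi (0:ℝ), (A ^ 2) ^ 2 * ((1 / Real.cosh (s * x + b)) ^ 2) ^ 2 :=
          integral_comp_abs (f := fun y => (A ^ 2) ^ 2 * ((1 / Real.cosh (s * y + b)) ^ 2) ^ 2)
      _ = 2 * ((A ^ 2) ^ 2 * ((2/3 - Real.tanh b + Real.tanh b ^ 3 / 3) / s)) := by
          rw [MeasureTheory.integral_const_mul, int_sech4 s b hs]
  have hintd : (∫ x : ℝ, (deriv ψ x) ^ 2)
      = 2 * (A ^ 2 * s ^ 2 * ((1 - Real.tanh b ^ 3) / (3 * s))) := by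
    calc (∫ x : ℝ, (deriv ψ x) ^ 2)
        = ∫ x : ℝ, (fun y => A ^ 2 * s ^ 2 *
            (Real.tanh (s * y + b) * (1 / Real.cosh (s * y + b))) ^ 2) |x| :=
          integral_congr_ae hderiv_ae
      _ = 2 * ∫ x in Ioi (0:ℝ), A ^ 2 * s ^ 2 *
            (Real.tanh (s * x + b) * (1 / Real.cosh (s * x + b))) ^ 2 :=
          integral_comp_abs (f := fun y => A ^ 2 * s ^ 2 *
            (Real.tanh (s * y + b) * (1 / Real.cosh (s * y + b))) ^ 2)
      _ = 2 * (A ^ 2 * s ^ 2 * ((1 - Real.tanh b ^ 3) / (3 * s))) := by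
          rw [MeasureTheory.integral_const_mul, int_tanhsech s b hs]
  have hcompl : (∫ x in ({(0:ℝ)}ᶜ : Set ℝ), (deriv ψ x) ^ 2) = ∫ x : ℝ, (deriv ψ x) ^ 2 := by
    have he : ({(0:ℝ)}ᶜ : Set ℝ) =ᵐ[volume] (Set.univ : Set ℝ) := by
      rw [ae_eq_univ, compl_compl]
      exact measure_singleton 0
    rw [Measure.restrict_congr_set he, Measure.restrict_univ]
  have hjump : (f₂ 0 - f₁ 0) ^ 2 = 4 * (A ^ 2 * (1 - Real.tanh b ^ 2)) := by
    rw [hf2' 0, hf1' 0, show s * (0:ℝ) + b = b by ring, show s * (0:ℝ) - b = -b by ring,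
      Real.cosh_neg]
    calc (A * (1 / Real.cosh b) - -(A * (1 / Real.cosh b))) ^ 2
        = 4 * (A ^ 2 * (1 / Real.cosh b) ^ 2) := by ring
      _ = 4 * (A ^ 2 * (1 - Real.tanh b ^ 2)) := by rw [my_sech_sq b]
  have hω32 : ω ^ ((3:ℝ)/2) = s ^ 3 := by
    rw [← hs2, ← Real.rpow_natCast s 2, ← Real.rpow_mul hs.le, ← Real.rpow_natCast s 3]
    norm_num
  have hAs : A ^ 2 = 2 * s ^ 2 / lam := by rw [hA2, hs2]
  refine ⟨?_, ?_, ?_⟩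
  · rw [hint2, hAs, hτ]
    field_simp
    ring
  · rw [hcompl, hintd, hjump, hint4, hAs, hτ, hω32]
    field_simp
    ring
  · rw [hcompl, hintd, hjump, hint4, hint2, hAs, hτ, hω32, ← hs2]
    field_simp
    ring

end
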